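/- Rado's theorem (sufficiency): if c₁,…,c_k ∈ ℤ are nonzero and there exists a nonempty subset I ⊆ {1,…,k} with ∑_{i∈I} cᵢ = 0, then the equation ∑_{i=1}^k cᵢ xᵢ = 0 is partition regular on ℕ: for every finite coloring of ℕ there exist x₁,…,x_k ∈ ℕ all of the same color with ∑_{i=1}^k cᵢ xᵢ = 0. -/
import Mathlib

open Finset

/-- Finitary van der Waerden: monochromatic arithmetic progressions with an
explicit bound, derived from the Hales–Jewett theorem. -/
lemma vdW_finitary (r L : ℕ) :
    ∃ N : ℕ, ∀ C : ℕ → Fin r, ∃ d, 0 < d ∧ ∃ b,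
      (∀ j ≤ L, C (b + j * d) = C b) ∧ b + L * d ≤ N := by
  obtain ⟨ι, _inst, hι⟩ :=
    Combinatorics.Line.exists_mono_in_high_dimension (Fin (L + 1)) (Fin r)
  refine ⟨Fintype.card ι * L, fun C => ?_⟩
  obtain ⟨l, cc, hl⟩ := hι fun v => C (∑ i, (v i : ℕ))
  classical
  set s : Finset ι := Finset.univ.filter (fun i => l.idxFun i = none) with hs
  set b : ℕ := ∑ i ∈ sᶜ, ((l.idxFun i).map Fin.val).getD 0 with hb
  have hdpos : 0 < s.card := by
    refine Finset.card_pos.mpr ⟨l.proper.choose, ?_⟩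
    rw [hs, Finset.mem_filter]
    exact ⟨Finset.mem_univ _, l.proper.choose_spec⟩
  have key : ∀ x : Fin (L + 1), C (b + (x : ℕ) * s.card) = cc := by
    intro x
    rw [← hl x]
    congr 1
    rw [← Finset.sum_add_sum_compl s, add_comm]
    congr 1
    · calc (x : ℕ) * s.card = ∑ _i ∈ s, (x : ℕ) := by
            rw [Finset.sum_const, smul_eq_mul, mul_comm]
        _ = ∑ i ∈ s, ((l x i : Fin (L + 1)) : ℕ) := by
            refine Finset.sum_congr rfl fun i hi => ?_
            rw [hs, Finset.mem_filter] at hi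
            rw [l.apply_none _ _ hi.right]
    · rw [hb, Finset.sum_congr rfl]
      intro i hi
      rw [hs, Finset.compl_filter, Finset.mem_filter] at hi
      obtain ⟨y, hy⟩ := Option.ne_none_iff_exists.mp hi.right
      simp [Combinatorics.Line.coe_apply, ← hy]
  have hcb : C b = cc := by
    have := key 0
    simpa using this
  have hcard : s.card ≤ Fintype.card ι := by
    simpa using Finset.card_le_card (Finset.subset_univ s)
  have hbbound : b ≤ (Fintype.card ι - s.card) * L := by
    rw [hb]
    calc ∑ i ∈ sᶜ, ((l.idxFun i).map Fin.val).getD 0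
        ≤ ∑ _i ∈ sᶜ, L := by
          refine Finset.sum_le_sum fun i _ => ?_
          cases h : l.idxFun i with
          | none => simp
          | some y => simpa [h] using Nat.lt_succ_iff.mp y.isLt
      _ = sᶜ.card * L := by rw [Finset.sum_const, smul_eq_mul]
      _ = (Fintype.card ι - s.card) * L := by rw [Finset.card_compl]
  refine ⟨s.card, hdpos, b, fun j hj => ?_, ?_⟩
  · have := key ⟨j, Nat.lt_succ_of_le hj⟩
    rw [hcb]
    simpa using this
  · calc b + L * s.card ≤ (Fintype.card ι - s.card) * L + L * s.card := by
          exact Nat.add_le_add_right hbbound _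
      _ = (Fintype.card ι - s.card) * L + s.card * L := by ring_nf
      _ = ((Fintype.card ι - s.card) + s.card) * L := by rw [add_mul]
      _ = Fintype.card ι * L := by rw [Nat.sub_add_cancel hcard]

/-- Brauer-type lemma: for any `q > 0` and `m`, any finite coloring of the positive
integers contains monochromatic `a`, `a + m·t`, `q·t` (with explicit bounds,
needed for the induction on the number of colors). -/
lemma brauer (q m : ℕ) (hq : 0 < q) :
    ∀ n : ℕ, ∃ N : ℕ, ∀ C : ℕ → Fin n, ∃ a t : ℕ, 0 < a ∧ 0 < t ∧
      C (a + m * t) = C a ∧ C (q * t) = C a ∧ a ≤ N ∧ a + m * t ≤ N ∧ q * t ≤ N := by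
  intro n
  induction n with
  | zero => exact ⟨0, fun C => (C 0).elim0⟩
  | succ n ih =>
    obtain ⟨N₀, hN₀⟩ := ih
    set M : ℕ := N₀ + 1 with hM
    set L : ℕ := 1 + m * M with hL
    obtain ⟨NW, hNW⟩ := vdW_finitary (n + 1) L
    refine ⟨q * NW * M + NW, fun C => ?_⟩
    obtain ⟨d, hd, b, hmono, hbound⟩ := hNW C
    have hL1 : 1 ≤ L := by omega
    have hdNW : d ≤ NW := by nlinarith
    by_cases hcase : ∃ i, 1 ≤ i ∧ i ≤ M ∧ C (q * (d * i)) = C b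
    · obtain ⟨i, hi1, hiM, hci⟩ := hcase
      refine ⟨b + d, d * i, by omega, by positivity, ?_, ?_, ?_, ?_, ?_⟩
      · have h1 : C (b + 1 * d) = C b := hmono 1 hL1
        have h2 : C (b + (1 + m * i) * d) = C b := hmono _ (by
          rw [hL]; exact by nlinarith)
        have e1 : b + d + m * (d * i) = b + (1 + m * i) * d := by ring
        have e2 : b + d = b + 1 * d := by ring
        rw [e1, e2, h1, h2]
      · have h1 : C (b + 1 * d) = C b := hmono 1 hL1
        have e2 : b + d = b + 1 * d := by ring
        rw [e2, h1, hci]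
      · have : b + d ≤ b + L * d := by nlinarith
        omega
      · have : b + d + m * (d * i) = b + (1 + m * i) * d := by ring
        have h2 : (1 + m * i) ≤ L := by rw [hL]; nlinarith
        have : b + d + m * (d * i) ≤ b + L * d := by nlinarith
        omega
      · have h1 : q * (d * i) ≤ q * (NW * M) :=
          Nat.mul_le_mul le_rfl (Nat.mul_le_mul hdNW hiM)
        have h2 : q * (NW * M) = q * NW * M := (mul_assoc q NW M).symm
        omega
    · push_neg at hcase
      -- every relevant multiple avoids the color `C b`
      have hbnd : ∀ x ≤ M, q * (d * x) ≤ q * NW * M := by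
        intro x hx
        calc q * (d * x) ≤ q * (NW * M) :=
              Nat.mul_le_mul le_rfl (Nat.mul_le_mul hdNW hx)
          _ = q * NW * M := (mul_assoc q NW M).symm
      obtain _ | n := n
      · refine absurd ?_ (hcase 1 le_rfl (by omega))
        have h1 := (C (q * (d * 1))).isLt
        have h2 := (C b).isLt
        exact Fin.ext (by omega)
      · 
        set e : Fin (n + 2) → Fin (n + 1) :=
          fun x => ((finSuccEquiv' (C b)) x).getD 0 with he
        have hinj : ∀ x y : Fin (n + 2), x ≠ C b → y ≠ C b → e x = e y → x = y := by
          intro x y hx hy hxy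
          have hx' : (finSuccEquiv' (C b)) x ≠ none := by
            intro h
            exact hx ((finSuccEquiv' (C b)).injective (by
              rw [h, finSuccEquiv'_at]))
          have hy' : (finSuccEquiv' (C b)) y ≠ none := by
            intro h
            exact hy ((finSuccEquiv' (C b)).injective (by
              rw [h, finSuccEquiv'_at]))
          obtain ⟨u, hu⟩ := Option.ne_none_iff_exists'.mp hx'
          obtain ⟨v, hv⟩ := Option.ne_none_iff_exists'.mp hy'
          rw [he] at hxy
          simp only [hu, hv, Option.getD_some] at hxy
          exact (finSuccEquiv' (C b)).injective (by rw [hu, hv, hxy])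
        obtain ⟨a', t', ha', ht', hc1, hc2, haN, hamN, hqN⟩ :=
          hN₀ (fun i => e (C (q * (d * i))))
        have r1 : C (q * (d * a')) ≠ C b := hcase a' ha' (by omega)
        have r2 : C (q * (d * (a' + m * t'))) ≠ C b :=
          hcase (a' + m * t') (by omega) (by omega)
        have r3 : C (q * (d * (q * t'))) ≠ C b :=
          hcase (q * t') (Nat.mul_pos hq ht') (by omega)
        have key1 : C (q * (d * (a' + m * t'))) = C (q * (d * a')) :=
          hinj _ _ r2 r1 hc1
        have key2 : C (q * (d * (q * t'))) = C (q * (d * a')) :=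
          hinj _ _ r3 r1 hc2
        refine ⟨q * (d * a'), q * (d * t'), by positivity, by positivity, ?_, ?_, ?_, ?_, ?_⟩
        · have : q * (d * a') + m * (q * (d * t')) = q * (d * (a' + m * t')) := by ring
          rw [this, key1]
        · have : q * (q * (d * t')) = q * (d * (q * t')) := by ring
          rw [this, key2]
        · have h1 : q * (d * a') ≤ q * NW * M := hbnd a' (by omega)
          omega
        · have h1 : q * (d * a') + m * (q * (d * t')) = q * (d * (a' + m * t')) := by ring
          have h2 : q * (d * (a' + m * t')) ≤ q * NW * M := hbnd _ (by omega)
          omega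
        · have h1 : q * (q * (d * t')) = q * (d * (q * t')) := by ring
          have h2 : q * (d * (q * t')) ≤ q * NW * M := hbnd _ (by omega)
          omega

/-- Rado's theorem (sufficiency of Rado's condition): if the nonzero integer
coefficients `c₁,…,c_k` have a nonempty partial sum equal to zero, then the equation
`∑ cᵢ xᵢ = 0` is partition regular on the positive integers. -/
theorem rado_sufficiency (k : ℕ) (c : Fin k → ℤ) (hc : ∀ i, c i ≠ 0)
    (hRado : ∃ I : Finset (Fin k), I.Nonempty ∧ ∑ i ∈ I, c i = 0)
    (r : ℕ) (C : ℕ → Fin r) :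
    ∃ x : Fin k → ℕ, (∀ i, 0 < x i) ∧
      (∃ j : Fin r, ∀ i, C (x i) = j) ∧
      ∑ i, c i * (x i : ℤ) = 0 := by
  classical
  obtain ⟨I, hIne, hIsum⟩ := hRado
  obtain ⟨i₀, hi₀⟩ := hIne
  set c₀ : ℤ := c i₀ with hc₀
  set s : ℤ := ∑ i ∈ Iᶜ, c i with hs
  set q : ℕ := c₀.natAbs with hqdef
  have hq : 0 < q := Int.natAbs_pos.mpr (hc i₀)
  set m0 : ℤ := if 0 < c₀ then -s else s with hm0
  have hkey : c₀ * m0 = -s * (q : ℤ) := by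
    rcases lt_trichotomy c₀ 0 with h | h | h
    · have : (q : ℤ) = -c₀ := by
        rw [hqdef]; omega
      rw [hm0, if_neg (by omega), this]; ring
    · exact absurd h (hc i₀)
    · have : (q : ℤ) = c₀ := by
        rw [hqdef]; omega
      rw [hm0, if_pos h, this]; ring
  set m : ℕ := m0.natAbs with hm
  obtain ⟨N, hN⟩ := brauer q m hq r
  obtain ⟨a, t, ha, ht, hcol1, hcol2, -, -, -⟩ := hN C
  -- choose v and w depending on the sign of m0
  set v : ℕ := if 0 ≤ m0 then a else a + m * t with hv
  set w : ℕ := if 0 ≤ m0 then a + m * t else a with hw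
  have hvw : (w : ℤ) - v = m0 * t := by
    rcases le_or_gt 0 m0 with h | h
    · rw [hv, hw, if_pos h, if_pos h]
      have : (m : ℤ) = m0 := by rw [hm]; omega
      push_cast
      rw [this]; ring
    · rw [hv, hw, if_neg (not_le.mpr h), if_neg (not_le.mpr h)]
      have : (m : ℤ) = -m0 := by rw [hm]; omega
      push_cast
      rw [this]; ring
  have hvpos : 0 < v := by
    rcases le_or_gt 0 m0 with h | h
    · rw [hv, if_pos h]; omega
    · rw [hv, if_neg (not_le.mpr h)]; omega
  have hwpos : 0 < w := by
    rcases le_or_gt 0 m0 with h | h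
    · rw [hw, if_pos h]; omega
    · rw [hw, if_neg (not_le.mpr h)]; omega
  have hCv : C v = C a := by
    rcases le_or_gt 0 m0 with h | h
    · rw [hv, if_pos h]
    · rw [hv, if_neg (not_le.mpr h)]; exact hcol1
  have hCw : C w = C a := by
    rcases le_or_gt 0 m0 with h | h
    · rw [hw, if_pos h]; exact hcol1
    · rw [hw, if_neg (not_le.mpr h)]
  refine ⟨fun i => if i ∈ I then (if i = i₀ then w else v) else q * t, ?_, ?_, ?_⟩
  · intro i
    dsimp only
    split
    · split
      · exact hwpos
      · exact hvpos
    · positivity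
  · refine ⟨C a, fun i => ?_⟩
    dsimp only
    split
    · split
      · exact hCw
      · exact hCv
    · exact hcol2
  · have hsplit : ∑ i, c i * ((if i ∈ I then (if i = i₀ then w else v) else q * t : ℕ) : ℤ)
        = ∑ i ∈ I, c i * ((if i = i₀ then w else v : ℕ) : ℤ)
          + ∑ i ∈ Iᶜ, c i * ((q * t : ℕ) : ℤ) := by
      rw [← Finset.sum_add_sum_compl I]
      congr 1
      · exact Finset.sum_congr rfl fun i hi => by rw [if_pos hi]
      · exact Finset.sum_congr rfl fun i hi => by
          rw [if_neg (Finset.mem_compl.mp hi)]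
    rw [hsplit]
    have h1 : ∑ i ∈ I, c i * ((if i = i₀ then w else v : ℕ) : ℤ)
        = c₀ * w + (∑ i ∈ I.erase i₀, c i) * v := by
      rw [← Finset.add_sum_erase _ _ hi₀, if_pos rfl, Finset.sum_mul]
      congr 1
      exact Finset.sum_congr rfl fun i hi => by
        rw [if_neg (Finset.ne_of_mem_erase hi)]
    have h2 : ∑ i ∈ I.erase i₀, c i = -c₀ := by
      rw [Finset.sum_erase_eq_sub hi₀, hIsum]; ring
    have h3 : ∑ i ∈ Iᶜ, c i * ((q * t : ℕ) : ℤ) = s * ((q : ℤ) * t) := by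
      rw [hs, Finset.sum_mul]
      push_cast
      exact Finset.sum_congr rfl fun i _ => by ring
    rw [h1, h2, h3]
    have : c₀ * (w : ℤ) + -c₀ * v = c₀ * ((w : ℤ) - v) := by ring
    rw [this, hvw]
    have : c₀ * (m0 * t) = (c₀ * m0) * t := by ring
    rw [this, hkey]
    ring
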